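/- Let G and H be finitely generated groups of uniformly exponential growth, let S_G and S_H be finite generating systems of G and H respectively, and let η: (G, d_{S_G}) → (H, d_{S_H}) be an ε-isometry for some ε ≥ 0. Then ω(G, S_G) = ω(H, S_H). -/

import Mathlib

/-! Common definitions: word metrics, quasi-isometries, rough isometries. -/

/-- `g` is a product of `n` elements of `S ∪ S⁻¹`. -/
def IsWordProd {G : Type*} [Group G] (S : Set G) (g : G) (n : ℕ) : Prop :=
  ∃ l : List G, l.length = n ∧ (∀ s ∈ l, s ∈ S ∪ S⁻¹) ∧ l.prod = g

/-- The word metric associated to a generating system `S`: the least `n` such that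
`x⁻¹ * y` is a product of `n` elements of `S ∪ S⁻¹`. -/
noncomputable def wdist {G : Type*} [Group G] (S : Set G) (x y : G) : ℕ :=
  sInf {n | IsWordProd S (x⁻¹ * y) n}

/-- The word norm `‖g‖_S = d_S(e, g)`. -/
noncomputable def wnorm {G : Type*} [Group G] (S : Set G) (g : G) : ℕ :=
  wdist S 1 g

/-- `(η, η')` is a `(lam, eps)`-quasi-isometry between `(X, dX)` and `(Y, dY)`. -/
def IsQIPair {X Y : Type*} (dX : X → X → ℝ) (dY : Y → Y → ℝ)
    (η : X → Y) (η' : Y → X) (lam eps : ℝ) : Prop :=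
  (∀ x x' : X, lam⁻¹ * dX x x' - eps ≤ dY (η x) (η x') ∧
      dY (η x) (η x') ≤ lam * dX x x' + eps) ∧
  (∀ y y' : Y, lam⁻¹ * dY y y' - eps ≤ dX (η' y) (η' y') ∧
      dX (η' y) (η' y') ≤ lam * dY y y' + eps) ∧
  (∀ y : Y, dY (η (η' y)) y ≤ eps) ∧
  (∀ x : X, dX (η' (η x)) x ≤ eps)

/-- `(η, η')` is an `eps`-isometry between `(X, dX)` and `(Y, dY)`. -/
def IsEpsIsomPair {X Y : Type*} (dX : X → X → ℝ) (dY : Y → Y → ℝ)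
    (η : X → Y) (η' : Y → X) (eps : ℝ) : Prop :=
  (∀ x x' : X, |dX x x' - dY (η x) (η x')| ≤ eps) ∧
  (∀ y y' : Y, |dY y y' - dX (η' y) (η' y')| ≤ eps) ∧
  (∀ y : Y, dY (η (η' y)) y ≤ eps) ∧
  (∀ x : X, dX (η' (η x)) x ≤ eps)

/-- The real-valued word metric. -/
noncomputable def wdistR {G : Type*} [Group G] (S : Set G) (x y : G) : ℝ :=
  (wdist S x y : ℝ)

/-- The ball of radius `k` around the identity in the word metric of `S`. -/
def wball {G : Type*} [Group G] (S : Set G) (k : ℕ) : Set G :=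
  {g : G | wdist S 1 g ≤ k}

/-- The exponential growth rate `ω(G, S) = limsup_k (#B_{G,S}(k))^(1/k)`. -/
noncomputable def growthRate {G : Type*} [Group G] (S : Set G) : ℝ :=
  Filter.limsup (fun k : ℕ => ((wball S k).ncard : ℝ) ^ ((k : ℝ)⁻¹)) Filter.atTop

/-- `G` has uniformly exponential growth: the infimum of the growth rates over all
finite generating systems is `> 1`. -/
def UniformlyExponentialGrowth (G : Type*) [Group G] : Prop :=
  1 < sInf {r : ℝ | ∃ S : Set G, S.Finite ∧ Subgroup.closure S = ⊤ ∧ r = growthRate S}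

section API
variable {G : Type*} [Group G] {S : Set G}

lemma isWordProd_nonempty (hgen : Subgroup.closure S = ⊤) (g : G) :
    ∃ n, IsWordProd S g n := by
  have hg : g ∈ (Subgroup.closure S).toSubmonoid := by simp [hgen]
  rw [Subgroup.closure_toSubmonoid] at hg
  obtain ⟨l, hl, hp⟩ := Submonoid.exists_list_of_mem_closure hg
  exact ⟨l.length, l, rfl, hl, hp⟩

lemma wnorm_def (g : G) : wnorm S g = sInf {n | IsWordProd S g n} := by
  simp [wnorm, wdist]

lemma wdist_eq_wnorm (x y : G) : wdist S x y = wnorm S (x⁻¹ * y) := by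
  simp [wnorm, wdist]

lemma wnorm_isWordProd (hgen : Subgroup.closure S = ⊤) (g : G) :
    IsWordProd S g (wnorm S g) := by
  rw [wnorm_def]
  exact Nat.sInf_mem (isWordProd_nonempty hgen g)

lemma wnorm_le {g : G} {n : ℕ} (h : IsWordProd S g n) : wnorm S g ≤ n := by
  rw [wnorm_def]; exact Nat.sInf_le h

lemma wnorm_one : wnorm S (1 : G) = 0 :=
  Nat.le_zero.mp (wnorm_le ⟨[], rfl, by simp, by simp⟩)

lemma wdist_self (x : G) : wdist S x x = 0 := by
  rw [wdist_eq_wnorm]; simp [wnorm_one]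

lemma wnorm_mul_le (hgen : Subgroup.closure S = ⊤) (g h : G) :
    wnorm S (g * h) ≤ wnorm S g + wnorm S h := by
  obtain ⟨l1, hl1, hm1, hp1⟩ := wnorm_isWordProd hgen g
  obtain ⟨l2, hl2, hm2, hp2⟩ := wnorm_isWordProd hgen h
  refine wnorm_le ⟨l1 ++ l2, by simp [hl1, hl2], ?_, by simp [hp1, hp2]⟩
  intro s hs
  rcases List.mem_append.mp hs with h' | h'
  · exact hm1 s h'
  · exact hm2 s h'

lemma wdist_triangle (hgen : Subgroup.closure S = ⊤) (x y z : G) :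
    wdist S x z ≤ wdist S x y + wdist S y z := by
  rw [wdist_eq_wnorm, wdist_eq_wnorm, wdist_eq_wnorm]
  have : x⁻¹ * z = (x⁻¹ * y) * (y⁻¹ * z) := by group
  rw [this]
  exact wnorm_mul_le hgen _ _

lemma mem_wball_iff {g : G} {k : ℕ} : g ∈ wball S k ↔ wnorm S g ≤ k := Iff.rfl

lemma one_mem_wball (k : ℕ) : (1 : G) ∈ wball S k := by
  simp [mem_wball_iff, wnorm_one]

lemma wball_zero (hgen : Subgroup.closure S = ⊤) : wball S 0 = {(1 : G)} := by
  ext g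
  simp only [Set.mem_singleton_iff]
  constructor
  · intro hg
    have h0 : wnorm S g = 0 := Nat.le_zero.mp hg
    obtain ⟨l, hl, -, hp⟩ := h0 ▸ wnorm_isWordProd hgen g
    rw [List.length_eq_zero_iff] at hl
    simp [hl] at hp
    exact hp.symm
  · rintro rfl; exact one_mem_wball 0

end API

section Fin
open scoped Pointwise
variable {G : Type*} [Group G] {S : Set G}

lemma wball_succ_subset (hgen : Subgroup.closure S = ⊤) (k : ℕ) :
    wball S (k + 1) ⊆ wball S k * (S ∪ S⁻¹ ∪ {1}) := by
  intro g hg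
  obtain ⟨l, hl, hm, hp⟩ := wnorm_isWordProd hgen g
  rcases Nat.lt_or_ge (wnorm S g) (k + 1) with h | h
  · have : g * 1 ∈ wball S k * (S ∪ S⁻¹ ∪ {1}) :=
      Set.mul_mem_mul (mem_wball_iff.mpr (Nat.lt_succ_iff.mp h)) (by simp)
    simpa using this
  · have hlen : l.length = k + 1 := hl.trans (le_antisymm hg h)
    have hne : l ≠ [] := by
      intro h0; rw [h0] at hlen; simp at hlen
    refine ⟨l.dropLast.prod, ?_, l.getLast hne, ?_, ?_⟩
    · refine mem_wball_iff.mpr (le_trans (wnorm_le ⟨l.dropLast, rfl, ?_, rfl⟩) ?_)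
      · exact fun s hs => hm s (List.mem_of_mem_dropLast hs)
      · rw [List.length_dropLast, hlen]; omega
    · exact Set.mem_union_left _ (hm _ (List.getLast_mem hne))
    · show l.dropLast.prod * l.getLast hne = g
      have h2 : l.dropLast.prod * [l.getLast hne].prod = g := by
        rw [← List.prod_append, List.dropLast_append_getLast hne, hp]
      simpa using h2

lemma wball_finite_card (hfin : S.Finite) (hgen : Subgroup.closure S = ⊤) (k : ℕ) :
    (wball S k).Finite ∧ (wball S k).ncard ≤ (S ∪ S⁻¹ ∪ {1}).ncard ^ k := by
  have hT : (S ∪ S⁻¹ ∪ {1} : Set G).Finite := (hfin.union hfin.inv).union (Set.finite_singleton 1)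
  induction k with
  | zero => rw [wball_zero hgen]; simp
  | succ k ih =>
    have hsub := wball_succ_subset hgen k
    have hfin2 : (wball S k * (S ∪ S⁻¹ ∪ {1}) : Set G).Finite := ih.1.mul hT
    refine ⟨hfin2.subset hsub, ?_⟩
    calc (wball S (k+1)).ncard ≤ (wball S k * (S ∪ S⁻¹ ∪ {1})).ncard :=
        Set.ncard_le_ncard hsub hfin2
    _ ≤ (wball S k).ncard * (S ∪ S⁻¹ ∪ {1}).ncard := by
        simpa [← Nat.card_coe_set_eq] using Set.natCard_mul_le (s := wball S k) (t := S ∪ S⁻¹ ∪ {1})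
    _ ≤ (S ∪ S⁻¹ ∪ {1}).ncard ^ k * (S ∪ S⁻¹ ∪ {1}).ncard := Nat.mul_le_mul_right _ ih.2
    _ = (S ∪ S⁻¹ ∪ {1}).ncard ^ (k+1) := by ring

end Fin

section Count
open scoped Classical
variable {G H : Type*} [Group G] [Group H]

lemma ball_card_le
    (SG : Set G) (hSGfin : SG.Finite) (hSGgen : Subgroup.closure SG = ⊤)
    (SH : Set H) (hSHfin : SH.Finite) (hSHgen : Subgroup.closure SH = ⊤)
    (η : G → H) (eps : ℝ) (heps : 0 ≤ eps)
    (h1 : ∀ x x' : G, |((wdist SG x x' : ℕ) : ℝ) - ((wdist SH (η x) (η x') : ℕ) : ℝ)| ≤ eps)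
    (k : ℕ) :
    (wball SG k).ncard ≤
      (wball SG ⌊eps⌋₊).ncard * (wball SH (k + (⌊eps⌋₊ + wnorm SH (η 1)))).ncard := by
  set C := (wball SG ⌊eps⌋₊).ncard with hC
  set m := ⌊eps⌋₊ + wnorm SH (η 1) with hm
  have finGk := (wball_finite_card hSGfin hSGgen k).1
  have finGe := (wball_finite_card hSGfin hSGgen ⌊eps⌋₊).1
  have finHk := (wball_finite_card hSHfin hSHgen (k + m)).1
  set sG := finGk.toFinset with hsG
  set sH := finHk.toFinset with hsH
  -- η maps the G ball into the H ball
  have hmaps : ∀ x ∈ sG, η x ∈ sH := by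
    intro x hx
    rw [hsG, Set.Finite.mem_toFinset] at hx
    rw [hsH, Set.Finite.mem_toFinset]
    have hbx : wdist SG 1 x ≤ k := hx
    have habs := h1 1 x
    rw [abs_le] at habs
    have tri : wdist SH 1 (η x) ≤ wdist SH 1 (η 1) + wdist SH (η 1) (η x) :=
      wdist_triangle hSHgen _ _ _
    have hreal : ((wdist SH 1 (η x) : ℕ) : ℝ) ≤
        eps + (((wnorm SH (η 1) + k : ℕ)) : ℝ) := by
      have tri' : ((wdist SH 1 (η x) : ℕ) : ℝ) ≤
          ((wdist SH 1 (η 1) : ℕ) : ℝ) + ((wdist SH (η 1) (η x) : ℕ) : ℝ) := by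
        exact_mod_cast tri
      have hbx' : ((wdist SG 1 x : ℕ) : ℝ) ≤ (k : ℝ) := by exact_mod_cast hbx
      have : ((wnorm SH (η 1) : ℕ) : ℝ) = ((wdist SH 1 (η 1) : ℕ) : ℝ) := by rfl
      push_cast
      push_cast at tri'
      rw [wnorm]
      linarith [habs.1]
    have hfl : wdist SH 1 (η x) ≤ ⌊eps + (((wnorm SH (η 1) + k : ℕ)) : ℝ)⌋₊ :=
      Nat.le_floor hreal
    rw [Nat.floor_add_natCast heps] at hfl
    show wdist SH 1 (η x) ≤ k + m
    omega
  -- fibers of η have size at most C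
  have hfib : ∀ a ∈ sG.image η, (sG.filter (fun x => η x = a)).card ≤ C := by
    intro a _
    rcases (sG.filter (fun x => η x = a)).eq_empty_or_nonempty with he | ⟨x₀, hx₀⟩
    · simp [he]
    · rw [Finset.mem_filter] at hx₀
      have hCcard : C = finGe.toFinset.card := Set.ncard_eq_toFinset_card _ finGe
      rw [hCcard]
      apply Finset.card_le_card_of_injOn (fun x => x₀⁻¹ * x)
      · intro x hxf
        rw [Finset.mem_coe, Finset.mem_filter] at hxf
        rw [Finset.mem_coe, Set.Finite.mem_toFinset]
        have habs := h1 x₀ x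
        have : η x = η x₀ := hxf.2.trans hx₀.2.symm
        rw [this, wdist_self] at habs
        simp only [Nat.cast_zero, sub_zero, abs_le] at habs
        have : wdist SG x₀ x ≤ ⌊eps⌋₊ := Nat.le_floor (by exact_mod_cast habs.2)
        show wdist SG 1 (x₀⁻¹ * x) ≤ ⌊eps⌋₊
        rwa [wdist_eq_wnorm, wnorm] at this
      · intro a _ b _ hab
        exact mul_left_cancel hab
  have hmain : sG.card ≤ C * (sG.image η).card := Finset.card_le_mul_card_image sG C hfib
  have himg : (sG.image η).card ≤ sH.card :=
    Finset.card_le_card (Finset.image_subset_iff.mpr hmaps)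
  have h1' : (wball SG k).ncard = sG.card := Set.ncard_eq_toFinset_card _ finGk
  have h2' : (wball SH (k + m)).ncard = sH.card := Set.ncard_eq_toFinset_card _ finHk
  rw [h1', h2']
  calc sG.card ≤ C * (sG.image η).card := hmain
  _ ≤ C * sH.card := Nat.mul_le_mul_left _ himg

end Count

section Analytic
open Filter Real

lemma rpow_root_le {x B : ℝ} (hx : 0 ≤ x) (hB : 1 ≤ B) (k : ℕ) (h : x ≤ B ^ k) :
    x ^ ((k : ℝ)⁻¹) ≤ B := by
  rcases Nat.eq_zero_or_pos k with rfl | hk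
  · simpa using hB
  · calc x ^ ((k : ℝ)⁻¹) ≤ (B ^ k) ^ ((k : ℝ)⁻¹) :=
        Real.rpow_le_rpow hx h (by positivity)
    _ = B := Real.pow_rpow_inv_natCast (by linarith) hk.ne'

lemma lt_pow_of_root_lt {x c : ℝ} (hx : 0 ≤ x) (hc : 0 < c) {k : ℕ} (hk : k ≠ 0)
    (h : x ^ ((k : ℝ)⁻¹) < c) : x < c ^ k := by
  have := pow_lt_pow_left₀ h (by positivity) hk
  rwa [Real.rpow_inv_natCast_pow hx hk] at this

lemma tendsto_root_one {D : ℝ} (hD : 0 < D) :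
    Filter.Tendsto (fun k : ℕ => D ^ ((k : ℝ)⁻¹)) Filter.atTop (nhds 1) := by
  have h1 : Filter.Tendsto (fun k : ℕ => ((k : ℝ))⁻¹) Filter.atTop (nhds 0) :=
    tendsto_inv_atTop_nhds_zero_nat
  have h2 := (Real.continuousAt_const_rpow (a := D) (b := 0) hD.ne').tendsto.comp h1
  simpa [Function.comp_def] using h2

lemma limsup_le_aux (a b : ℕ → ℕ) (C m : ℕ)
    (hab : ∀ k, a k ≤ C * b (k + m))
    (B : ℝ) (hB : 1 ≤ B)
    (haB : ∀ k : ℕ, (a k : ℝ) ≤ B ^ k)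
    (hbB : ∀ k : ℕ, (b k : ℝ) ≤ B ^ k)
    (hC : 1 ≤ C)
    (hL : 1 < Filter.limsup (fun k : ℕ => ((b k : ℝ)) ^ ((k : ℝ)⁻¹)) Filter.atTop) :
    Filter.limsup (fun k : ℕ => ((a k : ℝ)) ^ ((k : ℝ)⁻¹)) Filter.atTop ≤
      Filter.limsup (fun k : ℕ => ((b k : ℝ)) ^ ((k : ℝ)⁻¹)) Filter.atTop := by
  set u : ℕ → ℝ := fun k => ((a k : ℝ)) ^ ((k : ℝ)⁻¹) with hu
  set v : ℕ → ℝ := fun k => ((b k : ℝ)) ^ ((k : ℝ)⁻¹) with hv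
  have hubd : ∀ k, u k ≤ B := fun k => rpow_root_le (by positivity) hB k (haB k)
  have hvbd : ∀ k, v k ≤ B := fun k => rpow_root_le (by positivity) hB k (hbB k)
  have hvBdd : IsBoundedUnder (· ≤ ·) atTop v := isBoundedUnder_of ⟨B, hvbd⟩
  have huBdd : IsBoundedUnder (· ≤ ·) atTop u := isBoundedUnder_of ⟨B, hubd⟩
  by_contra hcon
  push_neg at hcon
  obtain ⟨c, hc1, hc2⟩ := exists_between hcon
  have hc_gt1 : 1 < c := lt_trans hL hc1
  have hcpos : 0 < c := by linarith
  have hec : ∀ᶠ k in atTop, v k < c := eventually_lt_of_limsup_lt hc1 hvBdd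
  obtain ⟨K, hK⟩ := eventually_atTop.mp hec
  set D : ℝ := (C : ℝ) * c ^ m with hD
  have hDpos : 0 < D := by positivity
  set rhs : ℕ → ℝ := fun k => D ^ ((k : ℝ)⁻¹) * c with hrhs
  have hrt : Tendsto rhs atTop (nhds c) := by
    have := (tendsto_root_one hDpos).mul_const c
    simpa using this
  have heu : ∀ᶠ k in atTop, u k ≤ rhs k := by
    filter_upwards [eventually_ge_atTop (max K 1)] with k hk
    have hk1 : 1 ≤ k := le_trans (le_max_right _ _) hk
    have hkK : K ≤ k := le_trans (le_max_left _ _) hk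
    have hb : (b (k + m) : ℝ) < c ^ (k + m) := by
      have := hK (k + m) (by omega)
      exact lt_pow_of_root_lt (by positivity) hcpos (by omega) this
    have hak : (a k : ℝ) ≤ D * c ^ k := by
      have h1 : (a k : ℝ) ≤ (C : ℝ) * (b (k + m) : ℝ) := by exact_mod_cast hab k
      have h2 : (C : ℝ) * (b (k + m) : ℝ) ≤ (C : ℝ) * c ^ (k + m) := by
        have hC0 : (0:ℝ) ≤ (C : ℝ) := by positivity
        nlinarith [hb.le]
      have h3 : (C : ℝ) * c ^ (k + m) = D * c ^ k := by
        rw [hD, pow_add]; ring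
      linarith
    calc u k ≤ (D * c ^ k) ^ ((k : ℝ)⁻¹) :=
        Real.rpow_le_rpow (by positivity) hak (by positivity)
    _ = D ^ ((k : ℝ)⁻¹) * (c ^ k) ^ ((k : ℝ)⁻¹) :=
        Real.mul_rpow hDpos.le (by positivity)
    _ = rhs k := by
        rw [Real.pow_rpow_inv_natCast hcpos.le (by omega)]
  have hlim : limsup u atTop ≤ limsup rhs atTop := by
    exact limsup_le_limsup heu
      (hu := isCoboundedUnder_le_of_le atTop (x := 0) (fun k => by positivity))
      (hv := hrt.isBoundedUnder_le)
  rw [hrt.limsup_eq] at hlim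
  exact absurd hc2 (not_lt.mpr hlim)

end Analytic

section Assemble
open Filter Real

lemma one_le_growthRate {G : Type*} [Group G] {S : Set G} (hfin : S.Finite)
    (hgen : Subgroup.closure S = ⊤) : 1 ≤ growthRate S := by
  set B := max ((S ∪ S⁻¹ ∪ {1}).ncard : ℝ) 1 with hBdef
  have hB : 1 ≤ B := le_max_right _ _
  have hbd : ∀ k : ℕ, ((wball S k).ncard : ℝ) ^ ((k : ℝ)⁻¹) ≤ B := by
    intro k
    refine rpow_root_le (by positivity) hB k ?_
    calc ((wball S k).ncard : ℝ) ≤ (((S ∪ S⁻¹ ∪ {1}).ncard : ℝ)) ^ k := by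
          exact_mod_cast (wball_finite_card hfin hgen k).2
    _ ≤ B ^ k := pow_le_pow_left₀ (by positivity) (le_max_left _ _) k
  have hone : ∀ k : ℕ, (1 : ℝ) ≤ ((wball S k).ncard : ℝ) ^ ((k : ℝ)⁻¹) := by
    intro k
    apply Real.one_le_rpow _ (by positivity)
    have : 0 < (wball S k).ncard :=
      (Set.ncard_pos (wball_finite_card hfin hgen k).1).mpr ⟨1, one_mem_wball k⟩
    exact_mod_cast this
  exact le_limsup_of_frequently_le (Frequently.of_forall hone) (isBoundedUnder_of ⟨B, hbd⟩)

lemma growthRate_le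
    {G H : Type*} [Group G] [Group H]
    (SG : Set G) (hSGfin : SG.Finite) (hSGgen : Subgroup.closure SG = ⊤)
    (SH : Set H) (hSHfin : SH.Finite) (hSHgen : Subgroup.closure SH = ⊤)
    (η : G → H) (eps : ℝ) (heps : 0 ≤ eps)
    (h1 : ∀ x x' : G, |((wdist SG x x' : ℕ) : ℝ) - ((wdist SH (η x) (η x') : ℕ) : ℝ)| ≤ eps)
    (hL : 1 < growthRate SH) :
    growthRate SG ≤ growthRate SH := by
  set cG := ((SG ∪ SG⁻¹ ∪ {1}).ncard : ℝ) with hcG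
  set cH := ((SH ∪ SH⁻¹ ∪ {1}).ncard : ℝ) with hcH
  set B := max (max cG cH) 1 with hBdef
  have hB : 1 ≤ B := le_max_right _ _
  refine limsup_le_aux (fun k => (wball SG k).ncard) (fun k => (wball SH k).ncard)
    ((wball SG ⌊eps⌋₊).ncard) (⌊eps⌋₊ + wnorm SH (η 1))
    (fun k => ball_card_le SG hSGfin hSGgen SH hSHfin hSHgen η eps heps h1 k)
    B hB ?_ ?_ ?_ hL
  · intro k
    calc ((wball SG k).ncard : ℝ) ≤ cG ^ k := by
          rw [hcG]; exact_mod_cast (wball_finite_card hSGfin hSGgen k).2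
    _ ≤ B ^ k := pow_le_pow_left₀ (by positivity)
          (le_trans (le_max_left _ _) (le_max_left _ _)) k
  · intro k
    calc ((wball SH k).ncard : ℝ) ≤ cH ^ k := by
          rw [hcH]; exact_mod_cast (wball_finite_card hSHfin hSHgen k).2
    _ ≤ B ^ k := pow_le_pow_left₀ (by positivity)
          (le_trans (le_max_right _ _) (le_max_left _ _)) k
  · exact (Set.ncard_pos (wball_finite_card hSGfin hSGgen ⌊eps⌋₊).1).mpr ⟨1, one_mem_wball _⟩

end Assemble

/-- An `eps`-isometry between two finitely generated groups of uniformly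
exponential growth (with fixed finite generating systems) preserves the exponential
growth rate. -/
theorem growth_rate_rough_isometry_invariant
    {G H : Type*} [Group G] [Group H]
    (hG : UniformlyExponentialGrowth G) (hH : UniformlyExponentialGrowth H)
    (SG : Set G) (hSGfin : SG.Finite) (hSGgen : Subgroup.closure SG = ⊤)
    (SH : Set H) (hSHfin : SH.Finite) (hSHgen : Subgroup.closure SH = ⊤)
    (η : G → H) (η' : H → G) (eps : ℝ) (heps : 0 ≤ eps)
    (hqi : IsEpsIsomPair (wdistR SG) (wdistR SH) η η' eps) :
    growthRate SG = growthRate SH := by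
  have hbddG : BddBelow {r : ℝ | ∃ S : Set G, S.Finite ∧ Subgroup.closure S = ⊤ ∧
      r = growthRate S} := by
    refine ⟨1, ?_⟩
    rintro r ⟨S, hfin, hgen, rfl⟩
    exact one_le_growthRate hfin hgen
  have hbddH : BddBelow {r : ℝ | ∃ S : Set H, S.Finite ∧ Subgroup.closure S = ⊤ ∧
      r = growthRate S} := by
    refine ⟨1, ?_⟩
    rintro r ⟨S, hfin, hgen, rfl⟩
    exact one_le_growthRate hfin hgen
  have hGgt : 1 < growthRate SG :=
    lt_of_lt_of_le hG (csInf_le hbddG ⟨SG, hSGfin, hSGgen, rfl⟩)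
  have hHgt : 1 < growthRate SH :=
    lt_of_lt_of_le hH (csInf_le hbddH ⟨SH, hSHfin, hSHgen, rfl⟩)
  obtain ⟨q1, q2, -, -⟩ := hqi
  refine le_antisymm ?_ ?_
  · exact growthRate_le SG hSGfin hSGgen SH hSHfin hSHgen η eps heps
      (fun x x' => q1 x x') hHgt
  · exact growthRate_le SH hSHfin hSHgen SG hSGfin hSGgen η' eps heps
      (fun y y' => q2 y y') hGgt
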